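/- Let R' be the smallest consecutive sublist of rows (a prefix-minimal window obtained by scanning rows in order) such that each predicted field appears at least twice in R'. If there exists a field p that is correctly predicted (p ∈ F ∩ F') and p appears exactly once in every record, then R' contains at least one complete record. -/

import Mathlib

/-- the document `D` is the concatenation of at least two nonempty records
`recs`, each generated from the same true template with true field set `F'`; `F` is the
predicted field set and every field of `F` occurs at least twice in `D`.  `R' = D.take t`
is the minimal prefix window in which every predicted field occurs at least twice.  If some
field `p ∈ F ∩ F'` occurs exactly once in every record, then `R'` contains at least one
complete record. -/
theorem stmt_12 {α : Type*} [DecidableEq α] (D : List α) (recs : List (List α))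
    (hjoin : D = recs.flatten) (hne : ∀ r ∈ recs, r ≠ []) (hrecs : 2 ≤ recs.length)
    (F F' : Finset α) (hF : ∀ f ∈ F, 2 ≤ D.count f)
    (p : α) (hpF : p ∈ F) (hpF' : p ∈ F')
    (honce : ∀ r ∈ recs, r.count p = 1)
    (t : ℕ)
    (ht : ∀ f ∈ F, 2 ≤ (D.take t).count f)
    (htmin : ∀ t' < t, ¬ (∀ f ∈ F, 2 ≤ (D.take t').count f)) :
    ∃ (pre : List (List α)) (rec : List α) (post : List (List α)),
      recs = pre ++ rec :: post ∧ pre.flatten.length + rec.length ≤ t := by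
  obtain ⟨r1, rest, rfl⟩ : ∃ r1 rest, recs = r1 :: rest := by
    cases recs with
    | nil => simp at hrecs
    | cons a l => exact ⟨a, l, rfl⟩
  refine ⟨[], r1, rest, rfl, ?_⟩
  simp only [List.flatten_nil, List.length_nil, Nat.zero_add]
  by_contra h
  push_neg at h
  have hsub : (D.take t).count p ≤ r1.count p := by
    have : D.take t = r1.take t := by
      rw [hjoin]
      simp only [List.flatten_cons]
      rw [List.take_append_of_le_length (le_of_lt h)]
    rw [this]
    exact List.Sublist.count_le p (List.take_sublist t r1)
  have h1 : r1.count p = 1 := honce r1 (by simp)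
  have h2 := ht p hpF
  omega
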